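/- If |s₂| > 1 and s₁ ≠ 0, then ∫₀^{2π} (−2(s₁ − cos 6θ))/(s₂ + sin 6θ) dθ = −sgn(s₂)·4π·s₁/√(s₂² − 1). In particular, the integrand's denominator never vanishes. -/

import Mathlib

open Real

set_option maxHeartbeats 1000000 in
theorem infinity_stability_integral (s₁ s₂ : ℝ) (hs₂ : 1 < |s₂|) (hs₁ : s₁ ≠ 0) :
    (∀ θ : ℝ, s₂ + Real.sin (6 * θ) ≠ 0) ∧
    ∫ θ in (0 : ℝ)..(2 * Real.pi),
        (-2 * (s₁ - Real.cos (6 * θ))) / (s₂ + Real.sin (6 * θ))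
      = -Real.sign s₂ * 4 * Real.pi * s₁ / Real.sqrt (s₂ ^ 2 - 1) := by
  have hcase : 1 < s₂ ∨ s₂ < -1 := by
    rcases lt_abs.1 hs₂ with h | h
    · exact Or.inl h
    · exact Or.inr (by linarith)
  have hs2sq : 0 < s₂ ^ 2 - 1 := by
    have := sq_abs s₂; nlinarith
  have hsqrt_pos : 0 < Real.sqrt (s₂ ^ 2 - 1) := Real.sqrt_pos.2 hs2sq
  have hsqrt_sq : Real.sqrt (s₂ ^ 2 - 1) ^ 2 = s₂ ^ 2 - 1 := Real.sq_sqrt hs2sq.le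
  set q := Real.sqrt (s₂ ^ 2 - 1) with hq
  set b := Real.sign s₂ * q with hbdef
  have hsg : Real.sign s₂ = 1 ∨ Real.sign s₂ = -1 := by
    rcases hcase with h | h
    · exact Or.inl (Real.sign_of_pos (by linarith))
    · exact Or.inr (Real.sign_of_neg (by linarith))
  have hbq : b = q ∨ b = -q := by
    rcases hsg with h | h <;> rw [hbdef, h] <;> ring_nf <;> simp
  have hb2 : b ^ 2 = s₂ ^ 2 - 1 := by
    rcases hbq with h | h <;> rw [h] <;> ring_nf <;> linarith [hsqrt_sq]
  have hbne : b ≠ 0 := by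
    rcases hbq with h | h <;> rw [h] <;> [exact ne_of_gt hsqrt_pos; exact neg_ne_zero.2 (ne_of_gt hsqrt_pos)]
  -- the denominator never vanishes
  have hden : ∀ t : ℝ, s₂ + Real.sin t ≠ 0 := by
    intro t
    have h1 := Real.neg_one_le_sin t
    have h2 := Real.sin_le_one t
    rcases hcase with h | h
    · exact ne_of_gt (by linarith)
    · exact ne_of_lt (by linarith)
  -- the sign of b matches s₂, and |s₂ + b| > 1
  have hA : ∀ t : ℝ, s₂ + b + Real.sin t ≠ 0 := by
    intro t
    have h1 := Real.neg_one_le_sin t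
    have h2 := Real.sin_le_one t
    rcases hcase with h | h
    · rcases hsg with hs | hs
      · have hbpos : 0 < b := by rw [hbdef, hs]; simpa using hsqrt_pos
        exact ne_of_gt (by linarith)
      · exfalso; rw [Real.sign_of_pos (by linarith : (0:ℝ) < s₂)] at hs; norm_num at hs
    · have hbneg : b < 0 := by
        rcases hsg with hs | hs
        · exfalso; rw [Real.sign_of_neg (by linarith : s₂ < 0)] at hs; norm_num at hs
        · rw [hbdef, hs]; simpa using hsqrt_pos
      exact ne_of_lt (by linarith)
  have hA0 : s₂ + b ≠ 0 := by simpa using hA 0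
  refine ⟨fun θ => hden (6 * θ), ?_⟩
  -- the antiderivative
  set F : ℝ → ℝ := fun θ =>
    -2 * s₁ * θ / b
      - (2 * s₁ / (3 * b)) * Real.arctan (Real.cos (6 * θ) / (s₂ + b + Real.sin (6 * θ)))
      + (1 / 3) * Real.log (s₂ + Real.sin (6 * θ)) with hF
  have hderiv : ∀ x ∈ Set.uIcc (0 : ℝ) (2 * Real.pi),
      HasDerivAt F ((-2 * (s₁ - Real.cos (6 * x))) / (s₂ + Real.sin (6 * x))) x := by
    intro x _
    set s := Real.sin (6 * x) with hs
    set c := Real.cos (6 * x) with hc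
    have pyth : s ^ 2 + c ^ 2 = 1 := by
      rw [hs, hc]; exact Real.sin_sq_add_cos_sq _
    have hAs : s₂ + b + s ≠ 0 := hA (6 * x)
    have hss : s₂ + s ≠ 0 := hden (6 * x)
    have h6 : HasDerivAt (fun θ : ℝ => 6 * θ) 6 x := by
      simpa using (hasDerivAt_id x).const_mul (6 : ℝ)
    have hsin : HasDerivAt (fun θ : ℝ => Real.sin (6 * θ)) (c * 6) x :=
      (Real.hasDerivAt_sin (6 * x)).comp x h6
    have hcos : HasDerivAt (fun θ : ℝ => Real.cos (6 * θ)) (-s * 6) x :=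
      (Real.hasDerivAt_cos (6 * x)).comp x h6
    have hdenom : HasDerivAt (fun θ : ℝ => s₂ + b + Real.sin (6 * θ)) (c * 6) x :=
      hsin.const_add (s₂ + b)
    have hu : HasDerivAt (fun θ : ℝ => Real.cos (6 * θ) / (s₂ + b + Real.sin (6 * θ)))
        ((-s * 6 * (s₂ + b + s) - c * (c * 6)) / (s₂ + b + s) ^ 2) x :=
      hcos.div hdenom hAs
    have harctan : HasDerivAt
        (fun θ : ℝ => Real.arctan (Real.cos (6 * θ) / (s₂ + b + Real.sin (6 * θ))))
        ((1 / (1 + (c / (s₂ + b + s)) ^ 2)) *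
          ((-s * 6 * (s₂ + b + s) - c * (c * 6)) / (s₂ + b + s) ^ 2)) x :=
      (Real.hasDerivAt_arctan _).comp x hu
    -- simplify the arctan derivative
    have hkey : (s₂ + b + s) ^ 2 + c ^ 2 = 2 * (s₂ + b) * (s₂ + s) := by
      linear_combination pyth + hb2
    have harctan' : HasDerivAt
        (fun θ : ℝ => Real.arctan (Real.cos (6 * θ) / (s₂ + b + Real.sin (6 * θ))))
        (3 * (b - s₂ - s) / (s₂ + s)) x := by
      convert harctan using 1
      have h1u : 1 + (c / (s₂ + b + s)) ^ 2 = 2 * (s₂ + b) * (s₂ + s) / (s₂ + b + s) ^ 2 := by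
        field_simp
        linear_combination hkey
      rw [h1u]
      have hAb : (s₂ + b) * (s₂ - b) = 1 := by linear_combination -hb2
      field_simp
      linear_combination 6 * pyth + 6 * hb2
    have hlog : HasDerivAt (fun θ : ℝ => Real.log (s₂ + Real.sin (6 * θ)))
        ((s₂ + s)⁻¹ * (c * 6)) x :=
      by have := (Real.hasDerivAt_log hss).comp x (hsin.const_add s₂); exact this
    have hlin : HasDerivAt (fun θ : ℝ => -2 * s₁ * θ / b) (-2 * s₁ / b) x := by
      simpa using ((hasDerivAt_id x).const_mul (-2 * s₁)).div_const b
    have := (hlin.sub (harctan'.const_mul (2 * s₁ / (3 * b)))).add (hlog.const_mul (1 / 3))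
    convert this using 1
    · rfl
    · rfl
    · rfl
    field_simp
    ring
  -- integrability of the integrand
  have hcont : Continuous fun θ : ℝ =>
      (-2 * (s₁ - Real.cos (6 * θ))) / (s₂ + Real.sin (6 * θ)) := by
    have hc1 : Continuous fun θ : ℝ => -2 * (s₁ - Real.cos (6 * θ)) := by fun_prop
    have hc2 : Continuous fun θ : ℝ => s₂ + Real.sin (6 * θ) := by fun_prop
    exact hc1.div hc2 fun θ => hden (6 * θ)
  rw [intervalIntegral.integral_eq_sub_of_hasDerivAt hderiv
    (hcont.intervalIntegrable 0 (2 * Real.pi))]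
  -- evaluate the endpoints
  have hsin2pi : Real.sin (6 * (2 * Real.pi)) = 0 := by
    simpa using Real.sin_add_nat_mul_two_pi 0 6
  have hcos2pi : Real.cos (6 * (2 * Real.pi)) = 1 := by
    simpa using Real.cos_nat_mul_two_pi 6
  rw [hF]
  simp only [hsin2pi, hcos2pi, mul_zero, Real.sin_zero, Real.cos_zero, add_zero]
  rcases hsg with hsgn | hsgn
  · have hbq' : b = q := by rw [hbdef, hsgn]; ring
    rw [hbq', hsgn]; field_simp; ring
  · have hbq' : b = -q := by rw [hbdef, hsgn]; ring
    rw [hbq', hsgn]; field_simp; ring
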